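/- Two dg Loday–Pirashvili modules (V, α) and (V, α') over g are homotopic if and only if there exists a family of linear maps h = {h_k : V^k ⊗ ∧^{k−1} g → g}_{1 ≤ k ≤ u+1} such that for all k, v ∈ V^k and x_1,…,x_k ∈ g: (α'_k − α_k)(v | x_1,…,x_k) = Σ_{i=1}^k (−1)^{i+1} [x_i, h_k(v | x_1,…,x̂_i,…,x_k)]_g + Σ_{i<j} (−1)^{i+j} h_k(v | [x_i,x_j]_g, x_1,…,x̂_i,…,x̂_j,…,x_k) + Σ_{i=1}^k (−1)^i h_k(x_i ▷ v | x_1,…,x̂_i,…,x_k) + h_{k+1}(d^V_k v | x_1,…,x_k). -/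

import Mathlib

set_option linter.unusedSectionVars false


/-!
STATEMENT 4.  (Proposition `Prop:homotopyinh`.)  Two dg Loday–Pirashvili
modules `(V, α)`, `(V, α')` are homotopic (as weak morphisms `V ⇝ g` of dg
`g`-modules) if and only if there is a family
`h = {h_k : V^k ⊗ ∧^{k-1} g → g}` satisfying the explicit identities of the
paper.

Encoding as in the companion files: the target `g` (degree 0, adjoint action)
is represented by a family `Wg` concentrated in degree 0 with an equivariant
identification `e0 : Wg 0 ≃ g`; the weak morphisms `α, α'` corresponding to
the families `A, A'` are encoded by componentwise data `F, F'` compatible with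
`A, A'`; "homotopic" is the componentwise relation `IsHomotopy`
(`f' - f = d_tot ∘ h + h ∘ d_tot`); `Hh l` encodes `h_{l+1}`.
-/

open scoped BigOperators

section Prelude

variable (K g : Type) [Field K] [CharZero K] [LieRing g] [LieAlgebra K g]

abbrev CEc (p : ℕ) (M : Type) [AddCommGroup M] [Module K M] : Type :=
  g [⋀^Fin p]→ₗ[K] M

def IsCEDiff {M : Type} [AddCommGroup M] [Module K M] [LieRingModule g M]
    (D : ∀ p : ℕ, CEc K g p M →ₗ[K] CEc K g (p+1) M) : Prop :=
  ∀ (p : ℕ) (ω : CEc K g p M) (xs : Fin (p+1) → g),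
    D p ω xs = ∑ i : Fin (p+1), ((-1 : ℤ)^(i : ℕ)) •
      (⁅xs i, ω (xs ∘ i.succAbove)⁆
        - ∑ j : Fin p, if (i : ℕ) ≤ (j : ℕ) then
            ω (Function.update (xs ∘ i.succAbove) j ⁅xs i, xs (i.succAbove j)⁆)
          else 0)

variable {K g}
variable (V W : ℤ → Type)
  [∀ i, AddCommGroup (V i)] [∀ i, Module K (V i)]
  [∀ i, LieRingModule g (V i)] [∀ i, LieModule K g (V i)]
  [∀ i, AddCommGroup (W i)] [∀ i, Module K (W i)]
  [∀ i, LieRingModule g (W i)] [∀ i, LieModule K g (W i)]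

def IsWeakMor
    (dV : ∀ i j : ℤ, j = i + 1 → (V i →ₗ[K] V j))
    (dW : ∀ i j : ℤ, j = i + 1 → (W i →ₗ[K] W j))
    (DW : ∀ (s : ℤ) (p : ℕ), CEc K g p (W s) →ₗ[K] CEc K g (p+1) (W s))
    (F : ∀ (l : ℕ) (s k : ℤ), s + l = k → (V k →ₗ[K] CEc K g l (W s))) : Prop :=
  (∀ (k k' : ℤ) (hk : k' = k + 1) (h1 : k' + ((0:ℕ):ℤ) = k') (h2 : k + ((0:ℕ):ℤ) = k)
      (v : V k),
    F 0 k' k' h1 (dV k k' hk v)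
      = (dW k k' hk).compAlternatingMap (F 0 k k h2 v)) ∧
  (∀ (m : ℕ) (s k k' : ℤ) (hk : k' = k + 1)
      (h1 : s + ((m+1 : ℕ):ℤ) = k') (h2 : s + ((m : ℕ):ℤ) = k)
      (h3 : (s-1) + ((m+1 : ℕ):ℤ) = k) (hs : s = (s-1) + 1)
      (v : V k) (xs : Fin (m+1) → g),
    F (m+1) s k' h1 (dV k k' hk v) xs
      + ∑ i : Fin (m+1), ((-1 : ℤ)^(i : ℕ)) •
          (F m s k h2 ⁅xs i, v⁆) (xs ∘ i.succAbove)
    = DW s m (F m s k h2 v) xs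
      + ((-1 : ℤ)^(m+1)) • dW (s-1) s hs ((F (m+1) (s-1) k h3 v) xs))

def IsHomotopy
    (dV : ∀ i j : ℤ, j = i + 1 → (V i →ₗ[K] V j))
    (dW : ∀ i j : ℤ, j = i + 1 → (W i →ₗ[K] W j))
    (DW : ∀ (s : ℤ) (p : ℕ), CEc K g p (W s) →ₗ[K] CEc K g (p+1) (W s))
    (F F' : ∀ (l : ℕ) (s k : ℤ), s + l = k → (V k →ₗ[K] CEc K g l (W s)))
    (H : ∀ (l : ℕ) (s k : ℤ), s + l + 1 = k → (V k →ₗ[K] CEc K g l (W s))) : Prop :=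
  (∀ (k k' : ℤ) (hk : k' = k + 1) (h0 : k + ((0:ℕ):ℤ) = k)
      (h1 : (k-1) + ((0:ℕ):ℤ) + 1 = k) (h2 : k + ((0:ℕ):ℤ) + 1 = k')
      (hs : k = (k-1) + 1) (v : V k),
    F' 0 k k h0 v
      = F 0 k k h0 v
        + (dW (k-1) k hs).compAlternatingMap (H 0 (k-1) k h1 v)
        + H 0 k k' h2 (dV k k' hk v)) ∧
  (∀ (m : ℕ) (s k k' : ℤ) (hk : k' = k + 1)
      (h0 : s + ((m+1 : ℕ):ℤ) = k) (hm : s + ((m : ℕ):ℤ) + 1 = k)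
      (h3 : (s-1) + ((m+1 : ℕ):ℤ) + 1 = k) (hs : s = (s-1) + 1)
      (h4 : s + ((m+1 : ℕ):ℤ) + 1 = k')
      (v : V k) (xs : Fin (m+1) → g),
    F' (m+1) s k h0 v xs
      = F (m+1) s k h0 v xs
        + DW s m (H m s k hm v) xs
        + ((-1 : ℤ)^(m+1)) • dW (s-1) s hs ((H (m+1) (s-1) k h3 v) xs)
        + H (m+1) s k' h4 (dV k k' hk v) xs
        - ∑ i : Fin (m+1), ((-1 : ℤ)^(i : ℕ)) •
            (H m s k hm ⁅xs i, v⁆) (xs ∘ i.succAbove))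

end Prelude
section Aux

variable {K g : Type} [Field K] [CharZero K] [LieRing g] [LieAlgebra K g]

lemma succAbove_val {m : ℕ} (i : Fin (m+1)) (t : Fin m) :
    ((i.succAbove t : Fin (m+1)) : ℕ) = if (t:ℕ) < (i:ℕ) then (t:ℕ) else (t:ℕ)+1 := by
  rw [Fin.succAbove]
  split_ifs with h1 h2 h3 <;> simp_all [Fin.lt_def]

lemma perm_move {m : ℕ} (h : g [⋀^Fin m]→ₗ[K] g) (v w : Fin m → g) (j : Fin m)
    (hw : ∀ t, v t = w (j.cycleRange t)) :
    h v = ((-1:ℤ)^(j:ℕ)) • h w := by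
  have hv : v = w ∘ j.cycleRange := funext hw
  rw [hv, AlternatingMap.map_perm, Fin.sign_cycleRange]
  simp [Units.smul_def]

lemma CE_formula {m : ℕ} (h : g [⋀^Fin m]→ₗ[K] g) (xs : Fin (m+1) → g) :
    ∑ i : Fin (m+1), ((-1 : ℤ)^(i : ℕ)) •
      (⁅xs i, h (xs ∘ i.succAbove)⁆
        - ∑ j : Fin m, if (i : ℕ) ≤ (j : ℕ) then
            h (Function.update (xs ∘ i.succAbove) j ⁅xs i, xs (i.succAbove j)⁆)
          else 0)
    = (∑ i : Fin (m+1), ((-1 : ℤ)^(i : ℕ)) • ⁅xs i, h (xs ∘ i.succAbove)⁆)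
      + ∑ i : Fin (m+1), ∑ j : Fin (m+1),
          if hij : (i : ℕ) < (j : ℕ) then
            ((-1 : ℤ)^((i:ℕ)+(j:ℕ))) • h (fun t : Fin m =>
              if (t : ℕ) = 0 then ⁅xs i, xs j⁆
              else xs ⟨if (t:ℕ) - 1 < (i:ℕ) then (t:ℕ) - 1
                       else if (t:ℕ) < (j:ℕ) then (t:ℕ)
                       else (t:ℕ) + 1,
                       (by have := t.isLt; split_ifs <;> omega : _ < m + 1 + 0)⟩)
          else 0 := by
  have main : ∀ i : Fin (m+1),
      (∑ j : Fin (m+1),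
          if hij : (i : ℕ) < (j : ℕ) then
            ((-1 : ℤ)^((i:ℕ)+(j:ℕ))) • h (fun t : Fin m =>
              if (t : ℕ) = 0 then ⁅xs i, xs j⁆
              else xs ⟨if (t:ℕ) - 1 < (i:ℕ) then (t:ℕ) - 1
                       else if (t:ℕ) < (j:ℕ) then (t:ℕ)
                       else (t:ℕ) + 1,
                       (by have := t.isLt; split_ifs <;> omega : _ < m + 1 + 0)⟩)
          else 0)
      = -(((-1 : ℤ)^(i : ℕ)) • ∑ j : Fin m, if (i : ℕ) ≤ (j : ℕ) then
            h (Function.update (xs ∘ i.succAbove) j ⁅xs i, xs (i.succAbove j)⁆)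
          else 0) := by
    intro i
    rw [Fin.sum_univ_succ, dif_neg (by simp), zero_add, Finset.smul_sum,
      ← Finset.sum_neg_distrib]
    refine Finset.sum_congr rfl fun j _ => ?_
    by_cases hij : (i:ℕ) ≤ (j:ℕ)
    · rw [dif_pos (by simp only [Fin.val_succ]; omega), if_pos hij]
      cases m with
      | zero => exact j.elim0
      | succ m' =>
        have key := perm_move h
          (Function.update (xs ∘ i.succAbove) j ⁅xs i, xs (i.succAbove j)⁆)
          (fun t : Fin (m'+1) =>
              if (t : ℕ) = 0 then ⁅xs i, xs j.succ⁆
              else xs ⟨if (t:ℕ) - 1 < (i:ℕ) then (t:ℕ) - 1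
                       else if (t:ℕ) < (j.succ:ℕ) then (t:ℕ)
                       else (t:ℕ) + 1,
                       by have := t.isLt; split_ifs <;> omega⟩) j ?_
        · rw [key, smul_smul, ← neg_smul]
          congr 1
          rw [Fin.val_succ]
          ring
        · intro t
          rcases lt_trichotomy t j with htj | htj | htj
          · have h1 : ((j.cycleRange t : Fin (m'+1)) : ℕ) = (t:ℕ)+1 :=
              Fin.coe_cycleRange_of_lt htj
            rw [Function.update_of_ne (ne_of_lt htj)]
            have h2 : ¬ ((j.cycleRange t : Fin (m'+1)) : ℕ) = 0 := by omega
            simp only [Function.comp_apply, if_neg h2]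
            congr 1
            apply Fin.ext
            rw [succAbove_val]
            simp only [Fin.val_succ, h1]
            have ht : (t:ℕ) < (j:ℕ) := htj
            split_ifs <;> omega
          · subst htj
            rw [Function.update_self]
            have h1 : ((t.cycleRange t : Fin (m'+1)) : ℕ) = 0 := by
              rw [Fin.cycleRange_self]; rfl
            simp only [if_pos h1]
            congr 2
            apply Fin.ext
            rw [succAbove_val, Fin.val_succ]
            have : (i:ℕ) ≤ (t:ℕ) := hij
            split_ifs <;> omega
          · have h1 : j.cycleRange t = t := Fin.cycleRange_of_gt htj
            have htj' : (j:ℕ) < (t:ℕ) := htj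
            rw [Function.update_of_ne (ne_of_gt htj)]
            have h2 : ¬ ((j.cycleRange t : Fin (m'+1)) : ℕ) = 0 := by
              rw [h1]; omega
            simp only [Function.comp_apply, if_neg h2]
            congr 1
            apply Fin.ext
            rw [succAbove_val]
            simp only [h1, Fin.val_succ]
            split_ifs <;> omega
    · rw [dif_neg (by simp only [Fin.val_succ]; omega), if_neg hij, smul_zero, neg_zero]
  simp only [smul_sub]
  rw [Finset.sum_sub_distrib, sub_eq_add_neg]
  congr 1
  rw [← Finset.sum_neg_distrib]
  exact (Finset.sum_congr rfl fun i _ => main i).symm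

/-- Post-composition with a linear map, as a linear map on component data. -/
def postcomp {M N P : Type}
    [AddCommGroup M] [Module K M] [AddCommGroup N] [Module K N]
    [AddCommGroup P] [Module K P] {l : ℕ}
    (f : N →ₗ[K] P) (T : M →ₗ[K] (g [⋀^Fin l]→ₗ[K] N)) :
    M →ₗ[K] (g [⋀^Fin l]→ₗ[K] P) where
  toFun v := f.compAlternatingMap (T v)
  map_add' u v := by ext xs; simp
  map_smul' c v := by ext xs; simp

lemma postcomp_apply {M N P : Type}
    [AddCommGroup M] [Module K M] [AddCommGroup N] [Module K N]
    [AddCommGroup P] [Module K P] {l : ℕ}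
    (f : N →ₗ[K] P) (T : M →ₗ[K] (g [⋀^Fin l]→ₗ[K] N)) (v : M) (xs : Fin l → g) :
    postcomp f T v xs = f (T v xs) := rfl

/-- Cast along an equality of indices. -/
def castV (R : Type) [Field R] (V : ℤ → Type) [∀ i, AddCommGroup (V i)]
    [∀ i, Module R (V i)] {k k' : ℤ} (h : k = k') : V k →ₗ[R] V k' := by
  subst h; exact LinearMap.id

@[simp] lemma castV_rfl (R : Type) [Field R] (V : ℤ → Type) [∀ i, AddCommGroup (V i)]
    [∀ i, Module R (V i)] {k : ℤ} (h : k = k) (v : V k) : castV R V h v = v := rfl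

/-- Transport of `e0.symm` to any degree `s = 0`. -/
def e0s (Wg : ℤ → Type) [∀ i, AddCommGroup (Wg i)] [∀ i, Module K (Wg i)]
    (e0 : Wg 0 ≃ₗ[K] g) : ∀ (s : ℤ), s = 0 → (g →ₗ[K] Wg s) := fun s hs => by
  subst hs; exact e0.symm.toLinearMap

@[simp] lemma e0s_zero (Wg : ℤ → Type) [∀ i, AddCommGroup (Wg i)] [∀ i, Module K (Wg i)]
    (e0 : Wg 0 ≃ₗ[K] g) (h : (0:ℤ) = 0) : e0s Wg e0 0 h = e0.symm.toLinearMap := rfl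

lemma e0_CE {W0 : Type} [AddCommGroup W0] [Module K W0] [LieRingModule g W0]
    (e0 : W0 ≃ₗ[K] g) (he0 : ∀ (x : g) (w : W0), e0 ⁅x, w⁆ = ⁅x, e0 w⁆)
    (D : ∀ p : ℕ, CEc K g p W0 →ₗ[K] CEc K g (p+1) W0) (hD : IsCEDiff K g D)
    {m : ℕ} (ω : CEc K g m W0) (xs : Fin (m+1) → g) :
    e0 (D m ω xs)
      = (∑ i : Fin (m+1), ((-1 : ℤ)^(i : ℕ)) • ⁅xs i, e0 (ω (xs ∘ i.succAbove))⁆)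
        + ∑ i : Fin (m+1), ∑ j : Fin (m+1),
            if hij : (i : ℕ) < (j : ℕ) then
              ((-1 : ℤ)^((i:ℕ)+(j:ℕ))) • e0 (ω (fun t : Fin m =>
                if (t : ℕ) = 0 then ⁅xs i, xs j⁆
                else xs ⟨if (t:ℕ) - 1 < (i:ℕ) then (t:ℕ) - 1
                         else if (t:ℕ) < (j:ℕ) then (t:ℕ)
                         else (t:ℕ) + 1,
                         (by have := t.isLt; split_ifs <;> omega : _ < m + 1 + 0)⟩))
            else 0 := by
  rw [hD m ω xs, map_sum]
  have step : ∀ i : Fin (m+1),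
      e0 (((-1 : ℤ)^(i : ℕ)) • (⁅xs i, ω (xs ∘ i.succAbove)⁆
          - ∑ j : Fin m, if (i : ℕ) ≤ (j : ℕ) then
              ω (Function.update (xs ∘ i.succAbove) j ⁅xs i, xs (i.succAbove j)⁆) else 0))
      = ((-1 : ℤ)^(i : ℕ)) • (⁅xs i, (e0.toLinearMap.compAlternatingMap ω) (xs ∘ i.succAbove)⁆
          - ∑ j : Fin m, if (i : ℕ) ≤ (j : ℕ) then
              (e0.toLinearMap.compAlternatingMap ω)
                (Function.update (xs ∘ i.succAbove) j ⁅xs i, xs (i.succAbove j)⁆) else 0) := by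
    intro i
    rw [map_zsmul, map_sub, he0, map_sum]
    congr 2
    refine Finset.sum_congr rfl fun j _ => ?_
    split_ifs
    · rfl
    · exact map_zero _
  rw [Finset.sum_congr rfl fun i _ => step i, CE_formula]
  simp only [LinearMap.compAlternatingMap_apply, LinearEquiv.coe_coe]

end Aux

/-- Two dg Loday–Pirashvili modules `(V, α)` and `(V, α')`
are homotopic if and only if there exists a family
`h = {h_k : V^k ⊗ ∧^{k-1} g → g}_{1 ≤ k}` (encoded by `Hh`, with
`Hh l = h_{l+1}`) such that for all `k`, `v ∈ V^k`, `x_0, …, x_{k-1} ∈ g`: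

`(α'_k - α_k)(v | x_0,…,x_{k-1})
  = Σ_i (-1)^i [x_i, h_k(v|…x̂_i…)]
    + Σ_{i<j} (-1)^{i+j} h_k(v | [x_i,x_j], …x̂_i…x̂_j…)
    + Σ_i (-1)^{i+1} h_k(x_i ▷ v|…x̂_i…)
    + h_{k+1}(d^V v | x_0,…,x_{k-1})`. -/
theorem statement4
    (K g : Type) [Field K] [CharZero K] [LieRing g] [LieAlgebra K g]
    [Module.Finite K g]
    (V : ℤ → Type) [∀ i, AddCommGroup (V i)] [∀ i, Module K (V i)]
    [∀ i, LieRingModule g (V i)] [∀ i, LieModule K g (V i)]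
    (dV : ∀ i j : ℤ, j = i + 1 → (V i →ₗ[K] V j))
    (hdVsq : ∀ (i j k : ℤ) (hij : j = i + 1) (hjk : k = j + 1) (v : V i),
      dV j k hjk (dV i j hij v) = 0)
    (hdVeq : ∀ (i j : ℤ) (h : j = i + 1) (x : g) (v : V i),
      dV i j h ⁅x, v⁆ = ⁅x, dV i j h v⁆)
    (hVnn : ∀ i : ℤ, i < 0 → Subsingleton (V i))
    (hVbdd : ∃ N : ℤ, ∀ i : ℤ, N < i → Subsingleton (V i))
    (Wg : ℤ → Type) [∀ i, AddCommGroup (Wg i)] [∀ i, Module K (Wg i)]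
    [∀ i, LieRingModule g (Wg i)] [∀ i, LieModule K g (Wg i)]
    (hWg0 : ∀ i : ℤ, i ≠ 0 → Subsingleton (Wg i))
    (dWg : ∀ i j : ℤ, j = i + 1 → (Wg i →ₗ[K] Wg j))
    (hdWg : ∀ (i j : ℤ) (h : j = i + 1) (w : Wg i), dWg i j h w = 0)
    (e0 : Wg 0 ≃ₗ[K] g)
    (he0 : ∀ (x : g) (w : Wg 0), e0 ⁅x, w⁆ = ⁅x, e0 w⁆)
    (DWg : ∀ (s : ℤ) (p : ℕ), CEc K g p (Wg s) →ₗ[K] CEc K g (p+1) (Wg s))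
    (hDWg : ∀ s : ℤ, IsCEDiff K g (DWg s))
    -- the two dg Loday–Pirashvili structures, as families and as weak morphisms
    (A A' : ∀ l : ℕ, V (l:ℤ) →ₗ[K] CEc K g l g)
    (F F' : ∀ (l : ℕ) (s k : ℤ), s + l = k → (V k →ₗ[K] CEc K g l (Wg s)))
    (hcompat : ∀ (l : ℕ) (h : (0:ℤ) + ((l:ℕ):ℤ) = (l:ℤ)) (v : V (l:ℤ))
      (xs : Fin l → g), e0 (F l 0 (l:ℤ) h v xs) = A l v xs)
    (hcompat' : ∀ (l : ℕ) (h : (0:ℤ) + ((l:ℕ):ℤ) = (l:ℤ)) (v : V (l:ℤ))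
      (xs : Fin l → g), e0 (F' l 0 (l:ℤ) h v xs) = A' l v xs)
    (hF : IsWeakMor V Wg dV dWg DWg F) (hF' : IsWeakMor V Wg dV dWg DWg F') :
    -- `(V,α)` and `(V,α')` are homotopic …
    (∃ H : ∀ (l : ℕ) (s k : ℤ), s + l + 1 = k → (V k →ₗ[K] CEc K g l (Wg s)),
      IsHomotopy V Wg dV dWg DWg F F' H)
      ↔
    -- … iff there is a family `h_k` satisfying the explicit identities
    (∃ Hh : ∀ l : ℕ, V ((l+1 : ℕ):ℤ) →ₗ[K] CEc K g l g,
      -- the `k = 0` identity: `α'_0 - α_0 = h_1 ∘ d^V`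
      (∀ (hk : ((1 : ℕ):ℤ) = ((0:ℕ):ℤ) + 1) (v : V ((0:ℕ):ℤ)),
        A' 0 v = A 0 v + Hh 0 (dV ((0:ℕ):ℤ) ((1:ℕ):ℤ) hk v)) ∧
      -- the identity for `k = m+1 ≥ 1`
      (∀ (m : ℕ) (hk : ((m+2 : ℕ):ℤ) = ((m+1 : ℕ):ℤ) + 1)
          (v : V ((m+1 : ℕ):ℤ)) (xs : Fin (m+1) → g),
        A' (m+1) v xs - A (m+1) v xs
          = (∑ i : Fin (m+1), ((-1 : ℤ)^(i : ℕ)) •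
              ⁅xs i, Hh m v (xs ∘ i.succAbove)⁆)
            + (∑ i : Fin (m+1), ∑ j : Fin (m+1),
                if hij : (i : ℕ) < (j : ℕ) then
                  ((-1 : ℤ)^((i:ℕ)+(j:ℕ))) • Hh m v (fun t : Fin m =>
                    if (t : ℕ) = 0 then ⁅xs i, xs j⁆
                    else xs ⟨if (t:ℕ) - 1 < (i:ℕ) then (t:ℕ) - 1
                             else if (t:ℕ) < (j:ℕ) then (t:ℕ)
                             else (t:ℕ) + 1,
                             by have := t.isLt; split_ifs <;> omega⟩)
                else 0)
            + (∑ i : Fin (m+1), ((-1 : ℤ)^((i:ℕ)+1)) •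
                Hh m ⁅xs i, v⁆ (xs ∘ i.succAbove))
            + Hh (m+1) (dV ((m+1:ℕ):ℤ) ((m+2:ℕ):ℤ) hk v) xs)) := by
  constructor
  · rintro ⟨H, hH1, hH2⟩
    refine ⟨fun l => postcomp e0.toLinearMap
      (H l 0 ((l+1:ℕ):ℤ) (by omega)), ?_, ?_⟩
    · -- degree 0 identity
      intro hk v
      have p0 : ((0:ℕ):ℤ) + ((0:ℕ):ℤ) = ((0:ℕ):ℤ) := by omega
      have p1 : (((0:ℕ):ℤ)-1) + ((0:ℕ):ℤ) + 1 = ((0:ℕ):ℤ) := by omega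
      have p2 : ((0:ℕ):ℤ) + ((0:ℕ):ℤ) + 1 = ((1:ℕ):ℤ) := by omega
      have ps : ((0:ℕ):ℤ) = ((0:ℕ):ℤ)-1 + 1 := by omega
      have E := hH1 ((0:ℕ):ℤ) ((1:ℕ):ℤ) hk p0 p1 p2 ps v
      ext xs
      have E2 := congrArg (fun f : CEc K g 0 (Wg ((0:ℕ):ℤ)) => e0 (f xs)) E
      simp only [AlternatingMap.add_apply, map_add, LinearMap.compAlternatingMap_apply,
        hdWg, map_zero, add_zero] at E2
      have t1 : e0 (F' 0 ((0:ℕ):ℤ) ((0:ℕ):ℤ) p0 v xs) = A' 0 v xs := hcompat' 0 p0 v xs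
      have t2 : e0 (F 0 ((0:ℕ):ℤ) ((0:ℕ):ℤ) p0 v xs) = A 0 v xs := hcompat 0 p0 v xs
      rw [t1, t2] at E2
      rw [AlternatingMap.add_apply, E2]
      rfl
    · -- degree ≥ 1 identity
      intro m hk v xs
      have q0 : (0:ℤ) + ((m+1:ℕ):ℤ) = ((m+1:ℕ):ℤ) := by omega
      have qm : (0:ℤ) + ((m:ℕ):ℤ) + 1 = ((m+1:ℕ):ℤ) := by omega
      have q3 : (0:ℤ)-1 + ((m+1:ℕ):ℤ) + 1 = ((m+1:ℕ):ℤ) := by omega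
      have qs : (0:ℤ) = (0:ℤ)-1 + 1 := by omega
      have q4 : (0:ℤ) + ((m+1:ℕ):ℤ) + 1 = ((m+2:ℕ):ℤ) := by omega
      have E := hH2 m 0 ((m+1:ℕ):ℤ) ((m+2:ℕ):ℤ) hk q0 qm q3 qs q4 v xs
      have E2 := congrArg e0 E
      simp only [map_add, map_sub, map_zsmul, map_sum, hdWg, smul_zero, add_zero] at E2
      rw [e0_CE e0 he0 (DWg 0) (hDWg 0)] at E2
      rw [hcompat' (m+1) q0 v xs, hcompat (m+1) q0 v xs] at E2
      have r0 : ∀ (w : V ((m+1:ℕ):ℤ)) (z : Fin m → g),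
          e0 ((H m 0 ((m+1:ℕ):ℤ) qm w) z)
            = (postcomp e0.toLinearMap (H m 0 ((m+1:ℕ):ℤ) (by omega)) w) z :=
        fun _ _ => rfl
      have r4 : ∀ (w : V ((m+2:ℕ):ℤ)) (z : Fin (m+1) → g),
          e0 ((H (m+1) 0 ((m+2:ℕ):ℤ) q4 w) z)
            = (postcomp e0.toLinearMap (H (m+1) 0 ((m+1+1:ℕ):ℤ) (by omega)) w) z :=
        fun _ _ => rfl
      simp only [r0, r4] at E2
      rw [E2]
      have hs3 : (∑ i : Fin (m+1), ((-1 : ℤ)^((i:ℕ)+1)) •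
            (postcomp e0.toLinearMap (H m 0 ((m+1:ℕ):ℤ) (by omega)) ⁅xs i, v⁆)
              (xs ∘ i.succAbove))
          = -∑ i : Fin (m+1), ((-1 : ℤ)^(i:ℕ)) •
            (postcomp e0.toLinearMap (H m 0 ((m+1:ℕ):ℤ) (by omega)) ⁅xs i, v⁆)
              (xs ∘ i.succAbove) := by
        rw [← Finset.sum_neg_distrib]
        refine Finset.sum_congr rfl fun i _ => ?_
        have : ((-1:ℤ)^((i:ℕ)+1)) = -((-1:ℤ)^(i:ℕ)) := by ring
        rw [this, neg_zsmul]
      rw [hs3]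
      abel
  · rintro ⟨Hh, ht0, ht1⟩
    refine ⟨fun l s k prf => if hs : s = 0 then
        ((postcomp (e0s Wg e0 s hs) (Hh l)).comp
          (castV K V (show k = ((l+1:ℕ):ℤ) by omega)))
      else 0, ?_, ?_⟩
    · -- degree 0 component of the homotopy relation
      intro k k' hk h0 h1 h2 hs v
      by_cases hk0 : k = 0
      · subst hk0
        obtain rfl : k' = ((0+1:ℕ):ℤ) := by omega
        ext xs
        apply e0.injective
        simp only [AlternatingMap.add_apply, map_add, LinearMap.compAlternatingMap_apply,
          hdWg, map_zero, add_zero]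
        simp only [↓reduceDIte, LinearMap.comp_apply, castV_rfl,
          postcomp_apply, e0s_zero, LinearEquiv.coe_coe, LinearEquiv.apply_symm_apply]
        have t1 : e0 (F' 0 (0:ℤ) (0:ℤ) h0 v xs) = A' 0 v xs := hcompat' 0 h0 v xs
        have t2 : e0 (F 0 (0:ℤ) (0:ℤ) h0 v xs) = A 0 v xs := hcompat 0 h0 v xs
        rw [t1, t2]
        have E : A' 0 v = A 0 v + Hh 0 (dV (0:ℤ) ((0+1:ℕ):ℤ) hk v) := ht0 hk v
        rw [E]
        rfl
      · haveI : Subsingleton (Wg k) := hWg0 k hk0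
        ext xs
        exact Subsingleton.elim _ _
    · -- higher components of the homotopy relation
      intro m s k k' hk h0 hm h3 hs4 h4 v xs
      by_cases hs0 : s = 0
      · subst hs0
        obtain rfl : k = ((m+1:ℕ):ℤ) := by omega
        obtain rfl : k' = ((m+1+1:ℕ):ℤ) := by omega
        apply e0.injective
        rw [hdWg]
        simp only [smul_zero, add_zero]
        simp only [↓reduceDIte, LinearMap.comp_apply, castV_rfl]
        simp only [map_add, map_sub, map_zsmul, map_sum]
        rw [e0_CE e0 he0 (DWg 0) (hDWg 0)]
        simp only [postcomp_apply, e0s_zero, LinearEquiv.coe_coe,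
          LinearEquiv.apply_symm_apply]
        have t1 : e0 (F' (m+1) (0:ℤ) ((m+1:ℕ):ℤ) h0 v xs) = A' (m+1) v xs :=
          hcompat' (m+1) h0 v xs
        have t2 : e0 (F (m+1) (0:ℤ) ((m+1:ℕ):ℤ) h0 v xs) = A (m+1) v xs :=
          hcompat (m+1) h0 v xs
        rw [t1, t2]
        have E : A' (m+1) v xs - A (m+1) v xs
            = (∑ i : Fin (m+1), ((-1 : ℤ)^(i : ℕ)) •
                ⁅xs i, Hh m v (xs ∘ i.succAbove)⁆)
              + (∑ i : Fin (m+1), ∑ j : Fin (m+1),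
                  if hij : (i : ℕ) < (j : ℕ) then
                    ((-1 : ℤ)^((i:ℕ)+(j:ℕ))) • Hh m v (fun t : Fin m =>
                      if (t : ℕ) = 0 then ⁅xs i, xs j⁆
                      else xs ⟨if (t:ℕ) - 1 < (i:ℕ) then (t:ℕ) - 1
                               else if (t:ℕ) < (j:ℕ) then (t:ℕ)
                               else (t:ℕ) + 1,
                               by have := t.isLt; split_ifs <;> omega⟩)
                  else 0)
              + (∑ i : Fin (m+1), ((-1 : ℤ)^((i:ℕ)+1)) •
                  Hh m ⁅xs i, v⁆ (xs ∘ i.succAbove))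
              + Hh (m+1) (dV ((m+1:ℕ):ℤ) ((m+1+1:ℕ):ℤ) hk v) xs :=
          ht1 m hk v xs
        rw [sub_eq_iff_eq_add] at E
        rw [E]
        have hs3 : (∑ i : Fin (m+1), ((-1 : ℤ)^((i:ℕ)+1)) •
              Hh m ⁅xs i, v⁆ (xs ∘ i.succAbove))
            = -∑ i : Fin (m+1), ((-1 : ℤ)^(i:ℕ)) •
              Hh m ⁅xs i, v⁆ (xs ∘ i.succAbove) := by
          rw [← Finset.sum_neg_distrib]
          refine Finset.sum_congr rfl fun i _ => ?_
          have : ((-1:ℤ)^((i:ℕ)+1)) = -((-1:ℤ)^(i:ℕ)) := by ring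
          rw [this, neg_zsmul]
        rw [hs3]
        abel
      · haveI : Subsingleton (Wg s) := hWg0 s hs0
        exact Subsingleton.elim _ _
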